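/- Let N be a positive natural number and a : Fin N → ℝ. There exists z : Fin N → ℝ such that for every i, a i + ∑_{j ≠ i} (z i − z j) ≤ 0, if and only if ∑_i a i ≤ 0. -/

import Mathlib

/-- Mismatch-variable decoupling over a complete communication graph:
the coupled inequality `∑ i, a i ≤ 0` can be split exactly into `N` local
inequalities by introducing mismatch variables `z i`. -/
theorem mismatch_decoupling_complete (N : ℕ) (hN : 0 < N) (a : Fin N → ℝ) :
    (∃ z : Fin N → ℝ,
        ∀ i : Fin N, a i + ∑ j ∈ Finset.univ.erase i, (z i - z j) ≤ 0)
      ↔ ∑ i, a i ≤ 0 := by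
  have key : ∀ (z : Fin N → ℝ) (i : Fin N),
      ∑ j ∈ Finset.univ.erase i, (z i - z j) = ∑ j : Fin N, (z i - z j) := by
    intro z i
    rw [← Finset.sum_erase_add _ _ (Finset.mem_univ i)]
    simp
  constructor
  · rintro ⟨z, hz⟩
    have h : ∑ i : Fin N, (a i + ∑ j ∈ Finset.univ.erase i, (z i - z j)) ≤ ∑ _i : Fin N, (0:ℝ) :=
      Finset.sum_le_sum (fun i _ => hz i)
    simp only [key] at h
    have h2 : ∑ i : Fin N, (a i + ∑ j : Fin N, (z i - z j))
        = ∑ i, a i := by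
      rw [Finset.sum_add_distrib]
      have : ∑ i : Fin N, ∑ j : Fin N, (z i - z j) = 0 := by
        simp [Finset.sum_sub_distrib, Finset.sum_comm]
        rw [Finset.mul_sum]
        exact sub_self _
      rw [this, add_zero]
    rw [h2] at h
    simpa using h
  · intro h
    refine ⟨fun i => -a i / N, fun i => ?_⟩
    rw [key (fun i => -a i / N) i]
    have hNpos : (0:ℝ) < N := by exact_mod_cast hN
    have : ∑ j : Fin N, ((-a i / N) - (-a j / N))
        = -a i + (∑ j, a j) / N := by
      rw [Finset.sum_sub_distrib, Finset.sum_const, Finset.card_univ, Fintype.card_fin]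
      field_simp
      rw [nsmul_eq_mul, Finset.sum_neg_distrib, ← Finset.sum_div]
      have e1 : (N:ℝ) * (a i / N) = a i := by field_simp
      have e2 : (N:ℝ) * ((∑ j, a j) / N) = ∑ j, a j := by field_simp
      linear_combination (-(N:ℝ)) * e1 + e2
    rw [this]
    have : a i + (-a i + (∑ j, a j) / N) = (∑ j, a j) / N := by ring
    rw [this]
    exact div_nonpos_of_nonpos_of_nonneg h hNpos.le
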